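/- For every real p ≥ 2 and every h₀ with 0 < h₀ < 1/(s·c·c₃), there exists a constant c₆ > 0, depending only on p, s, c, c₃ and h₀, such that: for every probability space, every drift function a, every matrix A⁽⁰⁾ and vector c⁽⁰⁾ with entries of absolute value at most c₃, every h ∈ (0, h₀], every t ∈ ℝ, every random vector Z : Ω → ℝ^d with E‖Z‖^p < ∞, and every family of measurable random vectors H⁽⁰⁾₁, …, H⁽⁰⁾_s that almost surely form drift stage values with data (Z, t, h): E[ max_{1≤i≤s} ‖H⁽⁰⁾_i − Z‖^p ] ≤ c₆ · (1 + E‖Z‖^p) · h^p. (Lemma 6.6.) -/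

import Mathlib

open MeasureTheory ProbabilityTheory

/-- Lemma 6.6: uniform moment bound for the increments of the drift stages of the SRK method,
with a constant depending only on `p`, `s`, `c`, `c₃` and `h₀`. -/
theorem stmt_11 (s : ℕ) (hs : 0 < s) (c c₃ : ℝ) (hc : 0 < c) (hc₃ : 0 < c₃)
    (p : ℝ) (hp : 2 ≤ p)
    (h₀ : ℝ) (hh₀ : 0 < h₀) (hh₀' : h₀ < 1 / ((s : ℝ) * c * c₃)) :
    ∃ c₆ > (0 : ℝ),
      ∀ (d : ℕ) (Ω : Type) [MeasurableSpace Ω] (μ : Measure Ω) [IsProbabilityMeasure μ]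
        (a : ℝ → EuclideanSpace ℝ (Fin d) → EuclideanSpace ℝ (Fin d)),
        (∀ t x, ‖a t x‖ ≤ c * (1 + ‖x‖)) →
        ∀ (A0 : Fin s → Fin s → ℝ) (c0 : Fin s → ℝ),
          (∀ i j, |A0 i j| ≤ c₃) → (∀ j, |c0 j| ≤ c₃) →
        ∀ (h : ℝ), 0 < h → h ≤ h₀ →
        ∀ (t : ℝ) (Z : Ω → EuclideanSpace ℝ (Fin d)), Measurable Z →
          Integrable (fun ω => ‖Z ω‖ ^ p) μ →
        ∀ (H0 : Fin s → Ω → EuclideanSpace ℝ (Fin d)),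
          (∀ i, Measurable (H0 i)) →
          (∀ᵐ ω ∂μ, ∀ i, H0 i ω = Z ω + h • ∑ j, A0 i j • a (t + c0 j * h) (H0 j ω)) →
          ∫ ω, (⨆ i : Fin s, ‖H0 i ω - Z ω‖ ^ p) ∂μ
            ≤ c₆ * (1 + ∫ ω, ‖Z ω‖ ^ p ∂μ) * h ^ p := by
  have hp0 : (0:ℝ) ≤ p := by linarith
  set B : ℝ := (s : ℝ) * c * c₃ with hB
  have hBpos : 0 < B := by
    have : (0:ℝ) < (s:ℝ) := by exact_mod_cast hs
    positivity
  have hq1 : h₀ * B < 1 := by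
    have := (lt_div_iff₀ hBpos).mp hh₀'
    linarith
  have hone : 0 < 1 - h₀ * B := by linarith
  set K : ℝ := B / (1 - h₀ * B) with hK
  have hKpos : 0 < K := div_pos hBpos hone
  refine ⟨(2 * K) ^ p, Real.rpow_pos_of_pos (by linarith) p, ?_⟩
  intro d Ω _ μ _ a ha A0 c0 hA0 hc0 h hh hhh₀ t Z hZm hZint H0 hH0m hae
  set c₆ : ℝ := (2 * K) ^ p with hc₆
  have hc₆pos : 0 < c₆ := Real.rpow_pos_of_pos (by linarith) p
  -- pointwise bound a.e.
  have key : ∀ᵐ ω ∂μ, (⨆ i : Fin s, ‖H0 i ω - Z ω‖ ^ p)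
      ≤ c₆ * (1 + ‖Z ω‖ ^ p) * h ^ p := by
    filter_upwards [hae] with ω hω
    haveI : Nonempty (Fin s) := ⟨⟨0, hs⟩⟩
    set g : Fin s → ℝ := fun i => ‖H0 i ω - Z ω‖ with hg
    have bdd : BddAbove (Set.range g) := (Set.finite_range g).bddAbove
    set M : ℝ := ⨆ i, g i with hM
    have hMnn : 0 ≤ M := le_trans (norm_nonneg _) (le_ciSup bdd (Classical.arbitrary _))
    have step1 : ∀ i, g i ≤ h * B * (1 + ‖Z ω‖ + M) := by
      intro i
      have hdiff : H0 i ω - Z ω = h • ∑ j, A0 i j • a (t + c0 j * h) (H0 j ω) := by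
        rw [hω i]; abel
      have hnorm : g i = h * ‖∑ j, A0 i j • a (t + c0 j * h) (H0 j ω)‖ := by
        show ‖H0 i ω - Z ω‖ = _
        rw [hdiff, norm_smul, Real.norm_eq_abs, abs_of_pos hh]
      rw [hnorm]
      have hsum : ‖∑ j, A0 i j • a (t + c0 j * h) (H0 j ω)‖
          ≤ ∑ j : Fin s, c₃ * (c * (1 + ‖Z ω‖ + M)) := by
        refine (norm_sum_le _ _).trans (Finset.sum_le_sum fun j _ => ?_)
        rw [norm_smul, Real.norm_eq_abs]
        have h1 : ‖a (t + c0 j * h) (H0 j ω)‖ ≤ c * (1 + ‖Z ω‖ + M) := by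
          refine (ha _ _).trans ?_
          have : ‖H0 j ω‖ ≤ ‖Z ω‖ + M := by
            have h2 : ‖H0 j ω‖ - ‖Z ω‖ ≤ g j := norm_sub_norm_le _ _
            have h3 : g j ≤ M := le_ciSup bdd j
            linarith
          nlinarith
        exact mul_le_mul (hA0 i j) h1 (norm_nonneg _)
          (hc₃.le)
      calc h * ‖∑ j, A0 i j • a (t + c0 j * h) (H0 j ω)‖
          ≤ h * (∑ j : Fin s, c₃ * (c * (1 + ‖Z ω‖ + M))) :=
            mul_le_mul_of_nonneg_left hsum hh.le
        _ = h * B * (1 + ‖Z ω‖ + M) := by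
            rw [Finset.sum_const, Finset.card_univ, Fintype.card_fin]; rw [hB]; push_cast; ring
    have step2 : M ≤ h * B * (1 + ‖Z ω‖ + M) := ciSup_le step1
    have hz : 0 ≤ ‖Z ω‖ := norm_nonneg _
    have step3 : M ≤ h * K * (1 + ‖Z ω‖) := by
      have hKeq : K * (1 - h₀ * B) = B := by rw [hK, div_mul_cancel₀ _ hone.ne']
      nlinarith [mul_le_mul_of_nonneg_right (mul_le_mul_of_nonneg_right hhh₀ hBpos.le) hMnn]
    have step4 : ∀ i, g i ^ p ≤ (h * K * (1 + ‖Z ω‖)) ^ p := fun i =>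
      Real.rpow_le_rpow (norm_nonneg _)
        ((le_ciSup bdd i).trans step3) hp0
    have hfin : (h * K * (1 + ‖Z ω‖)) ^ p ≤ c₆ * (1 + ‖Z ω‖ ^ p) * h ^ p := by
      have h1z : (0:ℝ) ≤ 1 + ‖Z ω‖ := by linarith
      have e1 : (h * K * (1 + ‖Z ω‖)) ^ p = h ^ p * K ^ p * (1 + ‖Z ω‖) ^ p := by
        rw [Real.mul_rpow (by positivity) h1z, Real.mul_rpow hh.le hKpos.le]
      have e2 : (1 + ‖Z ω‖) ^ p ≤ 2 ^ p * (1 + ‖Z ω‖ ^ p) := by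
        have : (1 + ‖Z ω‖) ^ p ≤ (2 * max 1 ‖Z ω‖) ^ p := by
          apply Real.rpow_le_rpow h1z ?_ hp0
          rcases le_total ‖Z ω‖ 1 with hle | hle
          · rw [max_eq_left hle]; linarith
          · rw [max_eq_right hle]; linarith
        refine this.trans ?_
        rw [Real.mul_rpow (by norm_num) (le_max_of_le_left zero_le_one)]
        gcongr
        rcases le_total ‖Z ω‖ 1 with hle | hle
        · rw [max_eq_left hle, Real.one_rpow]
          have : (0:ℝ) ≤ ‖Z ω‖ ^ p := Real.rpow_nonneg hz p
          linarith
        · rw [max_eq_right hle]; linarith [Real.rpow_nonneg hz p]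
      have e3 : c₆ = 2 ^ p * K ^ p := by
        rw [hc₆, Real.mul_rpow (by norm_num) hKpos.le]
      rw [e1, e3]
      have hKp : (0:ℝ) ≤ K ^ p := Real.rpow_nonneg hKpos.le p
      have hhp : (0:ℝ) ≤ h ^ p := Real.rpow_nonneg hh.le p
      calc h ^ p * K ^ p * (1 + ‖Z ω‖) ^ p
          ≤ h ^ p * K ^ p * (2 ^ p * (1 + ‖Z ω‖ ^ p)) := by
            apply mul_le_mul_of_nonneg_left e2 (by positivity)
        _ = 2 ^ p * K ^ p * (1 + ‖Z ω‖ ^ p) * h ^ p := by ring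
    calc (⨆ i, g i ^ p) ≤ (h * K * (1 + ‖Z ω‖)) ^ p := ciSup_le step4
      _ ≤ c₆ * (1 + ‖Z ω‖ ^ p) * h ^ p := hfin
  -- integrate
  have hGint : Integrable (fun ω => c₆ * (1 + ‖Z ω‖ ^ p) * h ^ p) μ := by
    have : Integrable (fun ω => (1:ℝ) + ‖Z ω‖ ^ p) μ := (integrable_const 1).add hZint
    exact (this.const_mul c₆).mul_const (h ^ p)
  have hnn : 0 ≤ᵐ[μ] fun ω => ⨆ i : Fin s, ‖H0 i ω - Z ω‖ ^ p := by
    refine Filter.Eventually.of_forall fun ω => ?_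
    exact Real.iSup_nonneg fun i => Real.rpow_nonneg (norm_nonneg _) p
  have := integral_mono_of_nonneg hnn hGint key
  refine this.trans ?_
  rw [show (fun ω => c₆ * (1 + ‖Z ω‖ ^ p) * h ^ p)
      = (fun ω => (c₆ * h ^ p) * (1 + ‖Z ω‖ ^ p)) by funext ω; ring]
  rw [integral_const_mul, integral_add (integrable_const 1) hZint, integral_const]
  simp [measure_univ]
  ring_nf
  apply le_of_eq; ring
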